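/- Consider the damped torque-actuated pendulum with parameters g, l, m, r > 0, whose dynamics are ẋ₁ = x₂, ẋ₂ = −(g/l) sin(x₁) − (r/(m l²)) x₂ + u/(m l²). Fix a target angle ξ₁ ∈ ℝ and gains w₁, w₂ > 0, and apply the exact feedback-linearising control u(x₁, x₂) = m l² ((g/l) sin(x₁) + (r/(m l²)) x₂ + w₁ (ξ₁ − x₁) − w₂ x₂). Then every differentiable solution (x₁, x₂) : ℝ → ℝ² of the closed-loop system satisfies x₁(t) → ξ₁ and x₂(t) → 0 as t → ∞. -/

import Mathlib

open Filter Real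

lemma aux_cexp_deriv (a : ℂ) (t : ℝ) :
    HasDerivAt (fun s : ℝ => Complex.exp (a * s)) (a * Complex.exp (a * t)) t := by
  have h1 : HasDerivAt (fun s : ℝ => a * (s : ℂ)) a t := by
    simpa using (Complex.ofRealCLM.hasDerivAt (x := t)).const_mul a
  simpa [mul_comm] using h1.cexp

lemma aux_ode_exp (c : ℂ) (z : ℝ → ℂ) (hz : ∀ t, HasDerivAt z (c * z t) t) :
    ∀ t, z t = z 0 * Complex.exp (c * t) := by
  intro t
  have hg : ∀ s, HasDerivAt (fun τ => z τ * Complex.exp (-c * τ)) 0 s := by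
    intro s
    have := (hz s).mul ((aux_cexp_deriv (-c) s))
    refine this.congr_deriv ?_
    ring
  have hconst : ∀ s, z s * Complex.exp (-c * s) = z 0 * Complex.exp (-c * 0) := by
    intro s
    exact is_const_of_deriv_eq_zero (fun x => (hg x).differentiableAt)
      (fun x => (hg x).deriv) s 0
  have := hconst t
  simp only [mul_zero, Complex.exp_zero, mul_one] at this
  have h2 := congrArg (· * Complex.exp (c * t)) this
  simpa [mul_assoc, ← Complex.exp_add] using h2

lemma aux_tendsto_cexp {lam : ℂ} (h : lam.re < 0) (c : ℂ) :
    Tendsto (fun t : ℝ => c * Complex.exp (lam * t)) atTop (nhds 0) := by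
  rw [tendsto_zero_iff_norm_tendsto_zero]
  have heq : ∀ t : ℝ, ‖c * Complex.exp (lam * t)‖ = ‖c‖ * Real.exp (lam.re * t) := by
    intro t
    rw [norm_mul, Complex.norm_exp]
    congr 2
    simp [Complex.mul_re]
  simp only [heq]
  have h1 : Tendsto (fun t : ℝ => Real.exp (lam.re * t)) atTop (nhds 0) :=
    Real.tendsto_exp_atBot.comp ((tendsto_const_mul_atBot_of_neg h).mpr tendsto_id)
  simpa using h1.const_mul ‖c‖

lemma aux_tendsto_mul_cexp {lam : ℂ} (h : lam.re < 0) :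
    Tendsto (fun t : ℝ => (t : ℂ) * Complex.exp (lam * t)) atTop (nhds 0) := by
  rw [tendsto_zero_iff_norm_tendsto_zero]
  set b : ℝ := -lam.re with hb
  have hbpos : 0 < b := by simp [hb]; linarith
  have h1 : Tendsto (fun x : ℝ => x * Real.exp (-x)) atTop (nhds 0) := by
    simpa using tendsto_pow_mul_exp_neg_atTop_nhds_zero 1
  have h2 : Tendsto (fun t : ℝ => (b * t) * Real.exp (-(b * t))) atTop (nhds 0) :=
    h1.comp ((tendsto_const_mul_atTop_of_pos hbpos).mpr tendsto_id)
  have h3 : Tendsto (fun t : ℝ => t * Real.exp (lam.re * t)) atTop (nhds 0) := by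
    have := h2.const_mul b⁻¹
    simp only [mul_zero] at this
    refine this.congr (fun t => ?_)
    have h5 : lam.re * t = -(b * t) := by rw [hb]; ring
    rw [h5]
    field_simp
  refine h3.congr' ?_
  filter_upwards [eventually_ge_atTop (0:ℝ)] with t ht
  rw [norm_mul, Complex.norm_exp, Complex.norm_real]
  have h4 : (lam * t).re = lam.re * t := by simp [Complex.mul_re]
  rw [h4, Real.norm_eq_abs, abs_of_nonneg ht]

lemma aux_re_div_two (zc : ℂ) : (zc / 2).re = zc.re / 2 := by
  simp [Complex.div_re, Complex.normSq]

/-- Feedback-linearised damped torque-actuated pendulum: under the exact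
inversion control `u(x₁,x₂) = m l² ((g/l) sin x₁ + (r/(m l²)) x₂ + w₁(ξ₁ − x₁) − w₂ x₂)`,
every solution of the closed-loop dynamics satisfies
`x₁(t) → ξ₁` and `x₂(t) → 0` as `t → ∞`. -/
theorem pendulum_feedback_linearised_attracting
    (g l m r : ℝ) (hg : 0 < g) (hl : 0 < l) (hm : 0 < m) (hr : 0 < r)
    (ξ₁ w₁ w₂ : ℝ) (hw₁ : 0 < w₁) (hw₂ : 0 < w₂)
    (u : ℝ → ℝ → ℝ)
    (hu : ∀ x₁ x₂, u x₁ x₂ =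
      m * l ^ 2 * ((g / l) * Real.sin x₁ + (r / (m * l ^ 2)) * x₂
        + w₁ * (ξ₁ - x₁) - w₂ * x₂))
    (x₁ x₂ : ℝ → ℝ)
    (hx₁ : Differentiable ℝ x₁) (hx₂ : Differentiable ℝ x₂)
    (hode₁ : ∀ t, deriv x₁ t = x₂ t)
    (hode₂ : ∀ t, deriv x₂ t =
      -(g / l) * Real.sin (x₁ t) - (r / (m * l ^ 2)) * x₂ t
        + u (x₁ t) (x₂ t) / (m * l ^ 2)) :
    Tendsto x₁ atTop (nhds ξ₁) ∧ Tendsto x₂ atTop (nhds 0) := by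
  have hml : (m * l ^ 2) ≠ 0 := by positivity
  have hf' : ∀ t, deriv x₂ t = w₁ * (ξ₁ - x₁ t) - w₂ * x₂ t := by
    intro t
    rw [hode₂ t, hu]
    field_simp
    ring
  set d : ℝ := w₂ ^ 2 - 4 * w₁ with hd
  set s : ℂ := if 0 ≤ d then ((Real.sqrt d : ℝ) : ℂ) else Complex.I * ((Real.sqrt (-d) : ℝ) : ℂ)
    with hsdef
  have hs2 : s ^ 2 = (d : ℂ) := by
    rw [hsdef]
    split_ifs with hcase
    · rw [← Complex.ofReal_pow, Real.sq_sqrt hcase]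
    · rw [mul_pow, Complex.I_sq, ← Complex.ofReal_pow, Real.sq_sqrt (by linarith)]
      push_cast
      ring
  set lam₁ : ℂ := (-(w₂ : ℂ) + s) / 2 with hl1
  set lam₂ : ℂ := (-(w₂ : ℂ) - s) / 2 with hl2
  have hsum : lam₁ + lam₂ = -(w₂ : ℂ) := by rw [hl1, hl2]; ring
  have hdc : (d : ℂ) = (w₂ : ℂ) ^ 2 - 4 * (w₁ : ℂ) := by rw [hd]; push_cast; ring
  have hprod : lam₁ * lam₂ = (w₁ : ℂ) := by
    rw [hl1, hl2]
    linear_combination (-(1 : ℂ)/4) * hs2 + (-(1 : ℂ)/4) * hdc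
  have hsre : s.re < w₂ ∧ -w₂ < s.re := by
    rw [hsdef]
    split_ifs with hcase
    · simp only [Complex.ofReal_re]
      have hlt : Real.sqrt d < w₂ := by
        have hdlt : d < w₂ ^ 2 := by rw [hd]; linarith
        calc Real.sqrt d < Real.sqrt (w₂ ^ 2) := Real.sqrt_lt_sqrt hcase hdlt
          _ = w₂ := Real.sqrt_sq hw₂.le
      exact ⟨hlt, by nlinarith [Real.sqrt_nonneg d]⟩
    · simp only [Complex.mul_re, Complex.I_re, Complex.I_im, Complex.ofReal_re,
        Complex.ofReal_im, zero_mul, one_mul, mul_zero, zero_sub, neg_zero]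
      constructor <;> linarith
  have hre₁ : lam₁.re < 0 := by
    rw [hl1, aux_re_div_two]
    simp only [Complex.add_re, Complex.neg_re, Complex.ofReal_re]
    linarith [hsre.1]
  have hre₂ : lam₂.re < 0 := by
    rw [hl2, aux_re_div_two]
    simp only [Complex.sub_re, Complex.neg_re, Complex.ofReal_re]
    linarith [hsre.2]
  set E : ℝ → ℂ := fun t => ((x₁ t - ξ₁ : ℝ) : ℂ) with hE
  set F : ℝ → ℂ := fun t => ((x₂ t : ℝ) : ℂ) with hF
  have hE' : ∀ t, HasDerivAt E (F t) t := by
    intro t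
    have h1 : HasDerivAt (fun τ => x₁ τ - ξ₁) (x₂ t) t := by
      have h2 := (hx₁ t).hasDerivAt.sub_const ξ₁
      rwa [hode₁ t] at h2
    exact h1.ofReal_comp
  have hF' : ∀ t, HasDerivAt F (-(w₁ : ℂ) * E t - (w₂ : ℂ) * F t) t := by
    intro t
    have h1 : HasDerivAt x₂ (w₁ * (ξ₁ - x₁ t) - w₂ * x₂ t) t := by
      have h2 := (hx₂ t).hasDerivAt
      rwa [hf' t] at h2
    have h3 := h1.ofReal_comp
    convert h3 using 1
    rw [hE, hF]
    push_cast
    ring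
  set z : ℝ → ℂ := fun t => F t - lam₂ * E t with hzd
  set w : ℝ → ℂ := fun t => F t - lam₁ * E t with hwd
  have hz' : ∀ t, HasDerivAt z (lam₁ * z t) t := by
    intro t
    have h1 := (hF' t).sub ((hE' t).const_mul lam₂)
    refine h1.congr_deriv ?_
    rw [hzd]
    linear_combination (E t) * hprod + (-(F t)) * hsum
  have hw' : ∀ t, HasDerivAt w (lam₂ * w t) t := by
    intro t
    have h1 := (hF' t).sub ((hE' t).const_mul lam₁)
    refine h1.congr_deriv ?_
    rw [hwd]
    linear_combination (E t) * hprod + (-(F t)) * hsum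
  have hzsol := aux_ode_exp lam₁ z hz'
  have hwsol := aux_ode_exp lam₂ w hw'
  have hztend : Tendsto z atTop (nhds 0) :=
    (aux_tendsto_cexp hre₁ (z 0)).congr fun t => (hzsol t).symm
  have hwtend : Tendsto w atTop (nhds 0) :=
    (aux_tendsto_cexp hre₂ (w 0)).congr fun t => (hwsol t).symm
  have hEtend : Tendsto E atTop (nhds 0) := by
    by_cases hs0 : s = 0
    · -- repeated root
      have hlam12 : lam₂ = lam₁ := by rw [hl1, hl2, hs0]; ring
      have hz0 : ∀ t, z 0 = (F t - lam₁ * E t) * Complex.exp (-lam₁ * t) := by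
        intro t
        have h4 : z t = F t - lam₁ * E t := by rw [hzd, hlam12]
        calc z 0 = z 0 * (Complex.exp (lam₁ * t) * Complex.exp (-lam₁ * t)) := by
              rw [← Complex.exp_add]; simp
          _ = z t * Complex.exp (-lam₁ * t) := by rw [hzsol t]; ring
          _ = (F t - lam₁ * E t) * Complex.exp (-lam₁ * t) := by rw [h4]
      have hG : ∀ t, HasDerivAt (fun τ => E τ * Complex.exp (-lam₁ * τ) - z 0 * τ) 0 t := by
        intro t
        have h1 := (hE' t).mul (aux_cexp_deriv (-lam₁) t)
        have h2 : HasDerivAt (fun τ : ℝ => z 0 * (τ : ℂ)) (z 0) t := by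
          simpa using (Complex.ofRealCLM.hasDerivAt (x := t)).const_mul (z 0)
        have h3 := h1.sub h2
        refine h3.congr_deriv ?_
        rw [hz0 t]
        ring
      have hGc : ∀ t, E t * Complex.exp (-lam₁ * t) - z 0 * t = E 0 := by
        intro t
        have h5 := is_const_of_deriv_eq_zero (f := fun τ => E τ * Complex.exp (-lam₁ * τ) - z 0 * τ)
          (fun x => (hG x).differentiableAt) (fun x => (hG x).deriv) t 0
        simpa using h5
      have hEform : ∀ t, E t = (E 0 + z 0 * t) * Complex.exp (lam₁ * t) := by
        intro t
        have h6 := hGc t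
        have h7 := congrArg (· * Complex.exp (lam₁ * t)) h6
        have h8 : Complex.exp (-lam₁ * t) * Complex.exp (lam₁ * t) = 1 := by
          rw [← Complex.exp_add]; simp
        calc E t = E t * (Complex.exp (-lam₁ * t) * Complex.exp (lam₁ * t)) := by
              rw [h8]; ring
          _ = (E t * Complex.exp (-lam₁ * t) - z 0 * t) * Complex.exp (lam₁ * t)
                + z 0 * t * Complex.exp (lam₁ * t) := by ring
          _ = E 0 * Complex.exp (lam₁ * t) + z 0 * t * Complex.exp (lam₁ * t) := by rw [hGc t]
          _ = (E 0 + z 0 * t) * Complex.exp (lam₁ * t) := by ring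
      have h9 : Tendsto (fun t : ℝ => E 0 * Complex.exp (lam₁ * t)
          + z 0 * ((t : ℂ) * Complex.exp (lam₁ * t))) atTop (nhds 0) := by
        have := (aux_tendsto_cexp hre₁ (E 0)).add ((aux_tendsto_mul_cexp hre₁).const_mul (z 0))
        simpa using this
      refine h9.congr fun t => ?_
      rw [hEform t]
      ring
    · -- distinct roots
      have hdiff : lam₁ - lam₂ = s := by rw [hl1, hl2]; ring
      have hEt : ∀ t, E t = s⁻¹ * (z t - w t) := by
        intro t
        have h1 : z t - w t = s * E t := by
          rw [hzd, hwd]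
          linear_combination (E t) * hdiff
        rw [h1, ← mul_assoc, inv_mul_cancel₀ hs0, one_mul]
      have h2 := (hztend.sub hwtend).const_mul s⁻¹
      simp only [sub_zero, mul_zero] at h2
      exact h2.congr fun t => (hEt t).symm
  have hFtend : Tendsto F atTop (nhds 0) := by
    have h1 := hztend.add (hEtend.const_mul lam₂)
    simp only [mul_zero, add_zero] at h1
    refine h1.congr fun t => ?_
    rw [hzd]
    ring
  constructor
  · have h1 : Tendsto (fun t => (E t).re) atTop (nhds (0 : ℂ).re) :=
      (Complex.continuous_re.tendsto _).comp hEtend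
    simp only [Complex.zero_re] at h1
    have h2 := h1.add_const ξ₁
    simp only [zero_add] at h2
    refine h2.congr fun t => ?_
    rw [hE]
    simp
  · have h1 : Tendsto (fun t => (F t).re) atTop (nhds (0 : ℂ).re) :=
      (Complex.continuous_re.tendsto _).comp hFtend
    simp only [Complex.zero_re] at h1
    refine h1.congr fun t => ?_
    rw [hF]
    simp
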